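/- arXiv:0906.4177 — 2 statements merged into one kernel-verified Lean document; each statement's English description precedes it below -/
import Mathlib

section
/- Let z = x + iy be a complex number with x ≥ 1/4 and |z| ≥ 4, and define I(z) = -Re ∫₀^∞ ( 2η/(η² + z²) ) · dη/(e^{2πη} - 1). Then I(z) ≤ 15/(128|z|²) + (4/3)·e^{-2π|z|/3}·( 1 + 1/|z|² ). -/
open Real MeasureTheory Set

lemma myexp_integral (a : ℝ) {b : ℝ} (hb : 0 < b) :
    ∫ x in Set.Ioi a, Real.exp (-(b*x)) = Real.exp (-(b*a)) / b := by
  have hd : ∀ t ∈ Set.Ici a, HasDerivAt (fun u => -Real.exp (-(b*u))/b) (Real.exp (-(b*t))) t := by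
    intro t _
    have : HasDerivAt (fun u => -(b*u)) (-b) t := by
      have h := ((hasDerivAt_id' t).const_mul b).neg
      simp only [mul_one] at h
      exact h
    have := (this.exp).neg.div_const b
    refine this.congr_deriv ?_
    field_simp
  have hi : IntegrableOn (fun t => Real.exp (-(b*t))) (Set.Ioi a) := by
    simpa [neg_mul] using exp_neg_integrableOn_Ioi a hb
  have ht : Filter.Tendsto (fun u => -Real.exp (-(b*u))/b) Filter.atTop (nhds 0) := by
    have h0 : Filter.Tendsto (fun u : ℝ => -Real.exp (-b*u) / b) Filter.atTop (nhds (-0/b)) := by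
      refine Filter.Tendsto.div_const (Filter.Tendsto.neg ?_) _
      exact Real.tendsto_exp_atBot.comp (Filter.tendsto_id.const_mul_atTop_of_neg (neg_neg_iff_pos.2 hb))
    simpa [neg_mul] using h0
  have := integral_Ioi_of_hasDerivAt_of_tendsto' hd hi ht
  rw [this]
  field_simp
  ring

lemma my_sinh_bound {η : ℝ} (hη : 0 < η) :
    η / (Real.exp (2*π*η) - 1) ≤ Real.exp (-(π*η)) / (2*π) := by
  set s := π * η with hs
  have hs0 : 0 < s := by positivity
  have hsinh : s ≤ Real.sinh s := Real.self_le_sinh_iff.mpr hs0.le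
  rw [Real.sinh_eq] at hsinh
  have hee : Real.exp s * Real.exp (-s) = 1 := by
    rw [← Real.exp_add]; simp
  have hss : Real.exp s * Real.exp s = Real.exp (2*π*η) := by
    rw [← Real.exp_add]; ring_nf; rw [hs]
  have hkey : 2*s*Real.exp s ≤ Real.exp (2*π*η) - 1 := by nlinarith [Real.exp_pos s]
  have hD : 0 < Real.exp (2*π*η) - 1 := by nlinarith [Real.exp_pos s]
  rw [div_le_div_iff₀ hD (by positivity)]
  have : Real.exp (-(π*η)) = Real.exp (-s) := by rw [hs]
  rw [this]
  nlinarith [Real.exp_pos s, Real.exp_pos (-s), mul_pos hs0 (Real.exp_pos s)]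

lemma my_tail_bound {t c : ℝ} (hc : 0 < c) (h : c ≤ t) :
    1 / (Real.exp t - 1) ≤ Real.exp (-t) / (1 - Real.exp (-c)) := by
  have h1 : Real.exp (-c) < 1 := Real.exp_lt_one_iff.mpr (by linarith)
  have hD : 0 < Real.exp t - 1 := by
    have := Real.add_one_le_exp t
    linarith
  rw [div_le_div_iff₀ hD (by linarith)]
  have h2 : Real.exp (-t) ≤ Real.exp (-c) := Real.exp_le_exp.mpr (by linarith)
  have h3 : Real.exp (-t) * (Real.exp t - 1) = 1 - Real.exp (-t) := by
    rw [mul_sub, ← Real.exp_add]; simp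
  nlinarith

lemma my_le_of_sq {a b : ℝ} (ha : 0 ≤ a) (hb : 0 ≤ b) (h : a^2 ≤ b^2) : a ≤ b := by
  nlinarith

open Complex

set_option maxHeartbeats 1000000 in
/-- Let `z = x + iy` with `x ≥ 1/4` and `|z| ≥ 4`, and let
`I(z) = -Re ∫₀^∞ (2η/(η² + z²)) dη/(e^{2πη} - 1)`. Then
`I(z) ≤ 15/(128|z|²) + (4/3) e^{-2π|z|/3}(1 + 1/|z|²)`. -/
theorem binet_integral_bound (x y : ℝ) (z : ℂ) (hz : z = x + y * I)
    (hx : 1 / 4 ≤ x) (habs : 4 ≤ ‖z‖) :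
    -(∫ η : ℝ in Set.Ioi (0 : ℝ),
        (2 * (η : ℂ) / ((η : ℂ) ^ 2 + z ^ 2)) *
          (1 / ((Real.exp (2 * Real.pi * η) : ℂ) - 1))).re ≤
      15 / (128 * (‖z‖) ^ 2) +
        (4 / 3) * Real.exp (-(2 * Real.pi * ‖z‖) / 3) *
          (1 + 1 / (‖z‖) ^ 2) := by
  have hπ := Real.pi_gt_d6
  have hπ0 : 0 < Real.pi := Real.pi_pos
  have hx0 : (0:ℝ) < x := by linarith
  set r := ‖z‖ with hrdef
  clear_value r
  have hr4 : (4:ℝ) ≤ r := habs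
  have hr0 : (0:ℝ) < r := by linarith
  set F : ℝ → ℂ := fun η : ℝ =>
    2 * (η : ℂ) / ((η : ℂ) ^ 2 + z ^ 2) *
      (1 / ((Real.exp (2 * Real.pi * η) : ℂ) - 1)) with hFdef
  clear_value F
  set A : ℝ → ℝ := fun η : ℝ => ‖(η : ℂ) ^ 2 + z ^ 2‖ with hAdef
  clear_value A
  -- squared modulus formula
  have hA_sq : ∀ η : ℝ, (A η)^2 = (η^2 + x^2 - y^2)^2 + (2*x*y)^2 := by
    intro η
    have he : ((η:ℂ)^2 + z^2) = ((η^2 + x^2 - y^2 : ℝ):ℂ) + ((2*x*y : ℝ):ℂ)*Complex.I := by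
      rw [hz]; push_cast; ring_nf; rw [Complex.I_sq]; ring
    rw [hAdef]; simp only [he, Complex.sq_norm, Complex.normSq_add_mul_I]
  have hA_nonneg : ∀ η : ℝ, 0 ≤ A η := by
    intro η; rw [hAdef]; exact norm_nonneg _
  have hA_x : ∀ η : ℝ, x*x ≤ A η := by
    intro η
    apply my_le_of_sq (by positivity) (hA_nonneg η)
    rw [hA_sq]
    nlinarith [sq_nonneg ((η-y)*(η+y)), sq_nonneg (x*(η-y)), sq_nonneg (x*(η+y))]
  have hA_116 : ∀ η : ℝ, (1:ℝ)/16 ≤ A η := by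
    intro η
    refine le_trans ?_ (hA_x η)
    nlinarith
  have hA_eta : ∀ η : ℝ, 0 ≤ η → x*η ≤ A η := by
    intro η hη
    apply my_le_of_sq (by positivity) (hA_nonneg η)
    rw [hA_sq]
    nlinarith [sq_nonneg ((η-y)*(η+y)), sq_nonneg (x*(η-y)), sq_nonneg (x*(η+y)),
      sq_nonneg (x*y), sq_nonneg (x*x), mul_nonneg (mul_nonneg hx0.le hx0.le) (sq_nonneg η)]
  have hA_r : ∀ η : ℝ, r^2 - η^2 ≤ A η := by
    intro η
    have h1 : ‖z^2‖ ≤ A η + ‖(η:ℂ)^2‖ := by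
      calc ‖z^2‖ = ‖(((η:ℂ)^2 + z^2)) + (-(η:ℂ)^2)‖ := by ring_nf
        _ ≤ A η + ‖-(η:ℂ)^2‖ := by
              rw [hAdef]; exact norm_add_le _ _
        _ = A η + ‖(η:ℂ)^2‖ := by rw [norm_neg]
    have h2 : ‖z^2‖ = r^2 := by rw [norm_pow, hrdef]
    have h3 : ‖(η:ℂ)^2‖ = η^2 := by
      rw [norm_pow, Complex.norm_real, Real.norm_eq_abs, _root_.sq_abs]
    rw [h2, h3] at h1; linarith
  -- positivity of the real exponential denominator
  have hD : ∀ η : ℝ, 0 < η → 0 < Real.exp (2*Real.pi*η) - 1 := by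
    intro η hη
    have := Real.add_one_le_exp (2*Real.pi*η)
    nlinarith
  -- norm formula
  have hFnorm : ∀ η : ℝ, 0 < η →
      ‖F η‖ = 2*η/(A η) * (1/(Real.exp (2*Real.pi*η) - 1)) := by
    intro η hη
    have hcast : ((Real.exp (2*Real.pi*η) : ℂ) - 1) = ((Real.exp (2*Real.pi*η) - 1 : ℝ) : ℂ) := by
      push_cast; ring
    have hcast2 : (2 * (η:ℂ)) = ((2*η : ℝ) : ℂ) := by push_cast; ring
    rw [hFdef]
    simp only [norm_mul, norm_div, hcast, hcast2, Complex.norm_real, Real.norm_eq_abs,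
      norm_one]
    rw [abs_of_pos (by linarith), abs_of_pos (hD η hη), hAdef]
    rw [abs_of_pos hη]
  -- nonvanishing of denominators
  have hne1 : ∀ η : ℝ, ((η:ℂ)^2 + z^2) ≠ 0 := by
    intro η h0
    have := hA_116 η
    rw [hAdef] at this; simp only [h0, norm_zero] at this; norm_num at this
  have hne2 : ∀ η : ℝ, 0 < η → ((Real.exp (2*Real.pi*η) : ℂ) - 1) ≠ 0 := by
    intro η hη h0
    have hcast : ((Real.exp (2*Real.pi*η) : ℂ) - 1) = ((Real.exp (2*Real.pi*η) - 1 : ℝ) : ℂ) := by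
      push_cast; ring
    rw [hcast] at h0
    have : Real.exp (2*Real.pi*η) - 1 = 0 := by exact_mod_cast h0
    have := hD η hη; linarith
  -- continuity
  have hcont : ContinuousOn F (Set.Ioi (0:ℝ)) := by
    rw [hFdef]
    apply ContinuousOn.mul
    · exact ContinuousOn.div (by fun_prop) (by fun_prop) (fun η _ => hne1 η)
    · exact ContinuousOn.div continuousOn_const (by fun_prop) (fun η hη => hne2 η hη)
  -- integrability of F on Ioi 0
  have hFint : IntegrableOn F (Set.Ioi (0:ℝ)) := by
    apply Integrable.mono' (((exp_neg_integrableOn_Ioi 0 hπ0).const_mul (16/Real.pi)))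
      (hcont.aestronglyMeasurable measurableSet_Ioi)
    filter_upwards [ae_restrict_mem measurableSet_Ioi] with η hη
    have hη : 0 < η := hη
    have h1 := my_sinh_bound hη
    have hA1 := hA_116 η
    have hAp : 0 < A η := by linarith
    have hDp := hD η hη
    rw [hFnorm η hη]
    have e1 : 2*η/(A η) * (1/(Real.exp (2*Real.pi*η) - 1))
        = (2/(A η)) * (η/(Real.exp (2*Real.pi*η) - 1)) := by ring
    rw [e1]
    have h2 : (2:ℝ)/(A η) ≤ 32 := by
      rw [div_le_iff₀ hAp]; linarith
    have h3 : 0 ≤ η/(Real.exp (2*Real.pi*η) - 1) := by positivity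
    calc (2/(A η)) * (η/(Real.exp (2*Real.pi*η) - 1))
        ≤ 32 * (Real.exp (-(Real.pi*η))/(2*Real.pi)) := by
          apply mul_le_mul h2 h1 h3 (by norm_num)
      _ = 16/Real.pi * Real.exp (-Real.pi*η) := by rw [neg_mul]; field_simp; ring
  have hFnormint : IntegrableOn (fun η => ‖F η‖) (Set.Ioi (0:ℝ)) := hFint.norm
  -- Step 1 : bound by integral of the norm
  have step1 : -(∫ η : ℝ in Set.Ioi (0:ℝ), F η).re ≤ ∫ η : ℝ in Set.Ioi (0:ℝ), ‖F η‖ := by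
    have h1 : -(∫ η : ℝ in Set.Ioi (0:ℝ), F η).re ≤ ‖∫ η : ℝ in Set.Ioi (0:ℝ), F η‖ := by
      have := Complex.abs_re_le_norm (∫ η : ℝ in Set.Ioi (0:ℝ), F η)
      cases abs_cases ((∫ η : ℝ in Set.Ioi (0:ℝ), F η).re) with
      | inl h => linarith [h.1, norm_nonneg (∫ η : ℝ in Set.Ioi (0:ℝ), F η)]
      | inr h => linarith [h.1]
    exact h1.trans (norm_integral_le_integral_norm F)
  -- split the integral at L = r/3
  set L : ℝ := r/3 with hLdef
  clear_value L
  have hL0 : (0:ℝ) ≤ L := by rw [hLdef]; positivity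
  have hL43 : (4:ℝ)/3 ≤ L := by rw [hLdef]; linarith
  have hunion : Set.Ioc (0:ℝ) L ∪ Set.Ioi L = Set.Ioi (0:ℝ) := Set.Ioc_union_Ioi_eq_Ioi hL0
  have hint1 : IntegrableOn (fun η => ‖F η‖) (Set.Ioc (0:ℝ) L) :=
    hFnormint.mono_set Set.Ioc_subset_Ioi_self
  have hint2 : IntegrableOn (fun η => ‖F η‖) (Set.Ioi L) :=
    hFnormint.mono_set (Set.Ioi_subset_Ioi hL0)
  have hsplit : ∫ η in Set.Ioi (0:ℝ), ‖F η‖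
      = (∫ η in Set.Ioc (0:ℝ) L, ‖F η‖) + ∫ η in Set.Ioi L, ‖F η‖ := by
    rw [← hunion, setIntegral_union (Set.Ioc_disjoint_Ioi le_rfl) measurableSet_Ioi hint1 hint2]
  -- piece 1
  have hg1int : IntegrableOn (fun η => 9/(8*Real.pi*r^2) * Real.exp (-Real.pi*η))
      (Set.Ioi (0:ℝ)) := (exp_neg_integrableOn_Ioi 0 hπ0).const_mul _
  have piece1 : ∫ η in Set.Ioc (0:ℝ) L, ‖F η‖ ≤ 9/(8*Real.pi^2*r^2) := by
    have hb1 : ∫ η in Set.Ioc (0:ℝ) L, ‖F η‖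
        ≤ ∫ η in Set.Ioc (0:ℝ) L, 9/(8*Real.pi*r^2) * Real.exp (-Real.pi*η) := by
      apply setIntegral_mono_on hint1 (hg1int.mono_set Set.Ioc_subset_Ioi_self)
        measurableSet_Ioc
      rintro η ⟨hη0, hηL⟩
      have h1 := my_sinh_bound hη0
      have hAr : (8:ℝ)/9 * r^2 ≤ A η := by
        have := hA_r η
        have hη2 : η^2 ≤ r^2/9 := by nlinarith
        linarith
      have hAp : 0 < A η := by nlinarith
      have hDp := hD η hη0
      rw [hFnorm η hη0]
      have e1 : 2*η/(A η) * (1/(Real.exp (2*Real.pi*η) - 1))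
          = (2/(A η)) * (η/(Real.exp (2*Real.pi*η) - 1)) := by ring
      rw [e1]
      have h2 : (2:ℝ)/(A η) ≤ 9/(4*r^2) := by
        rw [div_le_div_iff₀ hAp (by positivity)]; nlinarith
      have h3 : 0 ≤ η/(Real.exp (2*Real.pi*η) - 1) := by positivity
      calc (2/(A η)) * (η/(Real.exp (2*Real.pi*η) - 1))
          ≤ (9/(4*r^2)) * (Real.exp (-(Real.pi*η))/(2*Real.pi)) := by
            apply mul_le_mul h2 h1 h3 (by positivity)
        _ = 9/(8*Real.pi*r^2) * Real.exp (-Real.pi*η) := by rw [neg_mul]; ring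
    have hb2 : ∫ η in Set.Ioc (0:ℝ) L, 9/(8*Real.pi*r^2) * Real.exp (-Real.pi*η)
        ≤ ∫ η in Set.Ioi (0:ℝ), 9/(8*Real.pi*r^2) * Real.exp (-Real.pi*η) := by
      apply setIntegral_mono_set hg1int
      · filter_upwards with η; positivity
      · exact HasSubset.Subset.eventuallyLE Set.Ioc_subset_Ioi_self
    have hb3 : ∫ η in Set.Ioi (0:ℝ), 9/(8*Real.pi*r^2) * Real.exp (-Real.pi*η)
        = 9/(8*Real.pi^2*r^2) := by
      rw [MeasureTheory.integral_const_mul]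
      simp only [neg_mul]
      rw [myexp_integral 0 hπ0]
      rw [mul_zero, neg_zero, Real.exp_zero]
      ring
    linarith
  -- piece 2
  set c : ℝ := 1 - Real.exp (-(8*Real.pi/3)) with hcdef
  clear_value c
  have hc1 : Real.exp (-(8*Real.pi/3)) ≤ 1/25 := by
    have h8 : Real.exp (-(8*Real.pi/3)) ≤ Real.exp (-8) := by
      apply Real.exp_le_exp.mpr; nlinarith
    have h4 : (5:ℝ) ≤ Real.exp 4 := by
      have := Real.add_one_le_exp (4:ℝ); linarith
    have h25 : (25:ℝ) ≤ Real.exp 8 := by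
      have : Real.exp 8 = Real.exp 4 * Real.exp 4 := by rw [← Real.exp_add]; norm_num
      nlinarith [Real.exp_pos (4:ℝ)]
    have : Real.exp (-8) = (Real.exp 8)⁻¹ := by rw [Real.exp_neg]
    rw [this] at h8
    have h0 : (0:ℝ) < Real.exp 8 := Real.exp_pos _
    have : (Real.exp 8)⁻¹ ≤ 1/25 := by
      rw [inv_eq_one_div, div_le_div_iff₀ h0 (by norm_num)]
      linarith
    linarith
  have hc0 : (0:ℝ) < c := by
    rw [hcdef]
    have := Real.exp_pos (-(8*Real.pi/3))
    linarith
  have hg2int : IntegrableOn (fun η => 8/c * Real.exp (-(2*Real.pi*η))) (Set.Ioi L) := by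
    have := (exp_neg_integrableOn_Ioi L (show (0:ℝ) < 2*Real.pi by positivity)).const_mul (8/c)
    simp only [neg_mul] at this; exact this
  have piece2 : ∫ η in Set.Ioi L, ‖F η‖ ≤ 8/c * (Real.exp (-(2*Real.pi*L))/(2*Real.pi)) := by
    have hb1 : ∫ η in Set.Ioi L, ‖F η‖ ≤ ∫ η in Set.Ioi L, 8/c * Real.exp (-(2*Real.pi*η)) := by
      apply setIntegral_mono_on hint2 hg2int measurableSet_Ioi
      intro η hη
      have hηL : L < η := hη
      have hη0 : 0 < η := by linarith
      have hDp := hD η hη0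
      have htail := my_tail_bound (show (0:ℝ) < 8*Real.pi/3 by positivity)
        (show 8*Real.pi/3 ≤ 2*Real.pi*η by nlinarith)
      rw [← hcdef] at htail
      rw [hFnorm η hη0]
      have hAη : x*η ≤ A η := hA_eta η hη0.le
      have hAp : 0 < A η := by nlinarith
      have h2 : 2*η/(A η) ≤ 8 := by
        rw [div_le_iff₀ hAp]; nlinarith
      have h3 : 0 ≤ 1/(Real.exp (2*Real.pi*η) - 1) := by positivity
      calc 2*η/(A η) * (1/(Real.exp (2*Real.pi*η) - 1))
          ≤ 8 * (Real.exp (-(2*Real.pi*η))/c) := by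
            apply mul_le_mul h2 htail h3 (by norm_num)
        _ = 8/c * Real.exp (-(2*Real.pi*η)) := by field_simp
    have hb2 : ∫ η in Set.Ioi L, 8/c * Real.exp (-(2*Real.pi*η))
        = 8/c * (Real.exp (-(2*Real.pi*L))/(2*Real.pi)) := by
      rw [MeasureTheory.integral_const_mul, myexp_integral L (by positivity : (0:ℝ) < 2*Real.pi)]
    linarith
  -- final numerics
  have hπ2 : (9.6:ℝ) ≤ Real.pi^2 := by nlinarith
  have n1 : 9/(8*Real.pi^2*r^2) ≤ 15/(128*r^2) := by
    rw [div_le_div_iff₀ (by positivity) (by positivity)]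
    nlinarith [mul_pos hr0 hr0, mul_le_mul_of_nonneg_left hπ2 (le_of_lt (mul_pos hr0 hr0))]
  have hLr : Real.exp (-(2*Real.pi*L)) = Real.exp (-(2*Real.pi*r)/3) := by
    rw [hLdef]; ring_nf
  have n2 : 8/c * (Real.exp (-(2*Real.pi*L))/(2*Real.pi))
      ≤ 4/3 * Real.exp (-(2*Real.pi*r)/3) * (1 + 1/r^2) := by
    rw [hLr]
    have hE := Real.exp_pos (-(2*Real.pi*r)/3)
    have h1r : (0:ℝ) < 1/r^2 := by positivity
    have hcge : (24:ℝ)/25 ≤ c := by rw [hcdef]; linarith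
    have h : 4/(Real.pi*c) ≤ 4/3 := by
      rw [div_le_div_iff₀ (by positivity) (by norm_num)]
      nlinarith
    have key : 8/c * (Real.exp (-(2*Real.pi*r)/3)/(2*Real.pi))
        ≤ 4/3 * Real.exp (-(2*Real.pi*r)/3) := by
      calc 8/c * (Real.exp (-(2*Real.pi*r)/3)/(2*Real.pi))
          = 4/(Real.pi*c) * Real.exp (-(2*Real.pi*r)/3) := by ring
        _ ≤ 4/3 * Real.exp (-(2*Real.pi*r)/3) :=
            mul_le_mul_of_nonneg_right h hE.le
    nlinarith [mul_pos hE h1r]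
  calc -(∫ η : ℝ in Set.Ioi (0:ℝ), F η).re
      ≤ ∫ η : ℝ in Set.Ioi (0:ℝ), ‖F η‖ := step1
    _ = (∫ η in Set.Ioc (0:ℝ) L, ‖F η‖) + ∫ η in Set.Ioi L, ‖F η‖ := hsplit
    _ ≤ 9/(8*Real.pi^2*r^2) + 8/c * (Real.exp (-(2*Real.pi*L))/(2*Real.pi)) :=
        add_le_add piece1 piece2
    _ ≤ 15/(128*r^2) + 4/3 * Real.exp (-(2*Real.pi*r)/3) * (1 + 1/r^2) :=
        add_le_add n1 n2
end

section
/- Let x and y be real numbers with x ≥ 1/4, y ≥ 0, y² > x², and x² + y² < 16. Then -x/(2(x² + y²)) - ∫₀^{√(y² - x²)} ( 2η(η² + x² - y²)/((η² + x² - y²)² + 4x²y²) ) · dη/(e^{2πη} - 1) ≤ 0. -/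
open Real intervalIntegral

namespace BinetAux

noncomputable def Gfun (x y : ℝ) : ℝ → ℝ := fun η =>
  2*η*(y^2-x^2-η^2) / ((η^2+x^2-y^2)^2 + 4*x^2*y^2) * (1/(Real.exp (2*π*η) - 1))

lemma exp_half_pi_bounds : 0.2068 ≤ Real.exp (-(π/2)) ∧ Real.exp (-(π/2)) ≤ 0.2089 := by
  have hpi1 : (3.141592:ℝ) < π := Real.pi_gt_d6
  have hpi2 : π < 3.141593 := Real.pi_lt_d6
  have key : Real.exp (-(π/2)) = Real.exp (-(π/1024)) ^ (512:ℕ) := by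
    rw [← Real.exp_nat_mul]; norm_num; ring_nf
  have hlo : (1 - 3.141593/1024 : ℝ) ≤ Real.exp (-(π/1024)) := by
    have := Real.add_one_le_exp (-(π/1024)); nlinarith
  have hhi : Real.exp (-(π/1024)) ≤ 1/(1 + 3.141592/1024) := by
    have h1 := Real.add_one_le_exp (π/1024)
    have h2 : Real.exp (-(π/1024)) = 1 / Real.exp (π/1024) := by
      rw [Real.exp_neg]; ring
    rw [h2]
    apply div_le_div_of_nonneg_left (by norm_num) (by positivity) (by nlinarith)
  refine ⟨?_, ?_⟩
  · rw [key]
    have h3 : (0.2068:ℝ) ≤ (1 - 3.141593/1024) ^ (512:ℕ) := by rw [show (512:ℕ) = 128 * 4 by norm_num, pow_mul]; norm_num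
    have h4 : ((1:ℝ) - 3.141593/1024) ^ (512:ℕ) ≤ Real.exp (-(π/1024)) ^ (512:ℕ) :=
      pow_le_pow_left₀ (by norm_num) hlo _
    exact h3.trans h4
  · rw [key]
    have h3 : Real.exp (-(π/1024)) ^ (512:ℕ) ≤ (1/(1 + 3.141592/1024)) ^ (512:ℕ) :=
      pow_le_pow_left₀ (Real.exp_nonneg _) hhi _
    have h4 : ((1:ℝ)/(1 + 3.141592/1024)) ^ (512:ℕ) ≤ 0.2089 := by rw [show (512:ℕ) = 128 * 4 by norm_num, pow_mul]; norm_num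
    exact h3.trans h4

lemma exp_grid (m : ℕ) : Real.exp (-(2*π*((m:ℝ)/4))) = Real.exp (-(π/2)) ^ m := by
  rw [← Real.exp_nat_mul]; congr 1; push_cast; ring

lemma hasDeriv_aux (A B η : ℝ) :
    HasDerivAt (fun t => -((A*t+B)*(1/(2*π)) + A*(1/(4*π^2))) * Real.exp (-(2*π*t)))
      ((A*η+B) * Real.exp (-(2*π*η))) η := by
  have hπ : π ≠ 0 := Real.pi_ne_zero
  have h1 : HasDerivAt (fun t : ℝ => -(2*π*t)) (-(2*π)) η := by
    simpa using (hasDerivAt_id η).const_mul (-(2*π))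
  have hE := h1.exp
  have h2 : HasDerivAt (fun t : ℝ => A*t+B) A η := by
    simpa using ((hasDerivAt_id η).const_mul A).add_const B
  have h3 := (h2.mul_const (1/(2*π))).add_const (A*(1/(4*π^2)))
  have h4 := h3.neg.mul hE
  convert h4 using 1
  all_goals try rfl
  simp only [Pi.neg_apply]
  field_simp
  ring

lemma integral_aux (A B c d : ℝ) :
    ∫ η in c..d, (A*η+B) * Real.exp (-(2*π*η))
      = ((A*c+B)*(1/(2*π)) + A*(1/(4*π^2))) * Real.exp (-(2*π*c))
        - ((A*d+B)*(1/(2*π)) + A*(1/(4*π^2))) * Real.exp (-(2*π*d)) := by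
  have h := intervalIntegral.integral_eq_sub_of_hasDerivAt
    (f := fun t => -((A*t+B)*(1/(2*π)) + A*(1/(4*π^2))) * Real.exp (-(2*π*t)))
    (f' := fun t => (A*t+B) * Real.exp (-(2*π*t)))
    (fun t _ => hasDeriv_aux A B t)
    (Continuous.intervalIntegrable (by fun_prop) c d)
  rw [h]; ring

lemma Jbound (A B J : ℝ) (k k' : ℕ) (hA : 0 ≤ A) (hB : 0 ≤ B)
    (hnum : ((A*((k:ℝ)/4)+B)*0.15915498 + A*0.025330307)*(0.2089:ℝ)^k
        - ((A*((k':ℝ)/4)+B)*0.15915492 + A*0.02533029)*(0.2068:ℝ)^k' ≤ J) :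
    ∫ η in ((k:ℝ)/4)..((k':ℝ)/4), (A*η+B) * Real.exp (-(2*π*η)) ≤ J := by
  rw [integral_aux, exp_grid k, exp_grid k']
  have e1 := exp_half_pi_bounds
  have hpi1 : (3.141592:ℝ) < π := Real.pi_gt_d6
  have hpi2 : π < 3.141593 := Real.pi_lt_d6
  have hπ0 : (0:ℝ) < π := Real.pi_pos
  have hPhi : 1/(2*π) ≤ 0.15915498 := by rw [div_le_iff₀ (by linarith)]; nlinarith
  have hPlo : (0.15915492:ℝ) ≤ 1/(2*π) := by rw [le_div_iff₀ (by linarith)]; nlinarith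
  have hQhi : 1/(4*π^2) ≤ 0.025330307 := by rw [div_le_iff₀ (by positivity)]; nlinarith
  have hQlo : (0.02533029:ℝ) ≤ 1/(4*π^2) := by rw [le_div_iff₀ (by positivity)]; nlinarith
  have hc : 0 ≤ A*((k:ℝ)/4)+B := by positivity
  have hd : 0 ≤ A*((k':ℝ)/4)+B := by positivity
  have hEk : Real.exp (-(π/2))^k ≤ (0.2089:ℝ)^k :=
    pow_le_pow_left₀ (Real.exp_nonneg _) e1.2 k
  have hEk' : (0.2068:ℝ)^k' ≤ Real.exp (-(π/2))^k' :=
    pow_le_pow_left₀ (by norm_num) e1.1 k'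
  have t1 : (A*((k:ℝ)/4)+B)*(1/(2*π)) + A*(1/(4*π^2))
      ≤ (A*((k:ℝ)/4)+B)*0.15915498 + A*0.025330307 := by
    gcongr
  have t2 : (A*((k':ℝ)/4)+B)*0.15915492 + A*0.02533029
      ≤ (A*((k':ℝ)/4)+B)*(1/(2*π)) + A*(1/(4*π^2)) := by
    gcongr
  have s1 : ((A*((k:ℝ)/4)+B)*(1/(2*π)) + A*(1/(4*π^2))) * Real.exp (-(π/2))^k
      ≤ ((A*((k:ℝ)/4)+B)*0.15915498 + A*0.025330307) * (0.2089:ℝ)^k := by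
    apply mul_le_mul t1 hEk (pow_nonneg (Real.exp_nonneg _) k) (by positivity)
  have s2 : ((A*((k':ℝ)/4)+B)*0.15915492 + A*0.02533029) * (0.2068:ℝ)^k'
      ≤ ((A*((k':ℝ)/4)+B)*(1/(2*π)) + A*(1/(4*π^2))) * Real.exp (-(π/2))^k' := by
    apply mul_le_mul t2 hEk' (by positivity) (by positivity)
  linarith

lemma w_nonneg (η : ℝ) (hη : 0 ≤ η) : 0 ≤ 1/(Real.exp (2*π*η) - 1) := by
  apply one_div_nonneg.mpr
  have := Real.add_one_le_exp (2*π*η)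
  have : (0:ℝ) ≤ 2*π*η := by positivity
  nlinarith [Real.add_one_le_exp (2*π*η)]

lemma w0_bound (η : ℝ) (hη : 0 ≤ η) :
    2*η*(1/(Real.exp (2*π*η) - 1)) ≤ (2*η+0.3184) * Real.exp (-(2*π*η)) := by
  rcases eq_or_lt_of_le hη with h|h
  · rw [← h]; norm_num
  · have hπ : (3.141592:ℝ) < π := Real.pi_gt_d6
    have ht : 0 < 2*π*η := by have := Real.pi_pos; positivity
    have h1 : 2*π*η + 1 ≤ Real.exp (2*π*η) := Real.add_one_le_exp _
    have h2 : 0 < Real.exp (2*π*η) - 1 := by linarith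
    have h3 : Real.exp (-(2*π*η)) * Real.exp (2*π*η) = 1 := by
      rw [← Real.exp_add]; simp
    have hE : 0 < Real.exp (-(2*π*η)) := Real.exp_pos _
    rw [mul_one_div, div_le_iff₀ h2]
    have h4 := mul_le_mul_of_nonneg_left h1 hE.le
    nlinarith [mul_nonneg (mul_nonneg h.le hE.le) (show (0:ℝ) ≤ 0.3184*π - 1 by nlinarith)]

lemma wK_bound (A c Ec η : ℝ) (hc : 0 < c) (hη : c ≤ η)
    (hEc : Real.exp (-(2*π*c)) ≤ Ec) (hK : 2 ≤ A*(1-Ec)) (hA : 0 ≤ A) :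
    2*η*(1/(Real.exp (2*π*η) - 1)) ≤ (A*η+0) * Real.exp (-(2*π*η)) := by
  have hη0 : 0 < η := lt_of_lt_of_le hc hη
  have ht : 0 < 2*π*η := by have := Real.pi_pos; positivity
  have h1 : 2*π*η + 1 ≤ Real.exp (2*π*η) := Real.add_one_le_exp _
  have h2 : 0 < Real.exp (2*π*η) - 1 := by linarith
  have h3 : Real.exp (-(2*π*η)) * Real.exp (2*π*η) = 1 := by
    rw [← Real.exp_add]; simp
  have hmono : Real.exp (-(2*π*η)) ≤ Real.exp (-(2*π*c)) := by
    apply Real.exp_le_exp.mpr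
    have := Real.pi_pos; nlinarith
  have hE : 0 < Real.exp (-(2*π*η)) := Real.exp_pos _
  rw [mul_one_div, div_le_iff₀ h2]
  have h5 : A*η*(Real.exp (-(2*π*η)) * Real.exp (2*π*η)) = A*η := by rw [h3]; ring
  nlinarith [h5, mul_le_mul_of_nonneg_left (hmono.trans hEc) (mul_nonneg hA hη0.le),
    mul_nonneg (sub_nonneg.2 hK) hη0.le]

lemma pointwise (x y c d A B η : ℝ) (hx : 0 < x) (hy : 0 < y) (hc : 0 ≤ c)
    (hcη : c ≤ η) (hηs : η ≤ Real.sqrt (y^2-x^2)) (hηd : η ≤ d) (ha : x^2 < y^2)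
    (hw : 2*η*(1/(Real.exp (2*π*η) - 1)) ≤ (A*η+B) * Real.exp (-(2*π*η))) :
    Gfun x y η ≤ (max (y^2-x^2-c^2) 0 / (max (y^2-x^2-d^2) 0 ^2 + 4*x^2*y^2))
      * ((A*η+B) * Real.exp (-(2*π*η))) := by
  have hη0 : 0 ≤ η := hc.trans hcη
  have hb : 0 < 4*x^2*y^2 := by positivity
  have ha0 : (0:ℝ) ≤ y^2-x^2 := by linarith
  have hη2 : η^2 ≤ y^2-x^2 := by
    rw [← Real.sq_sqrt ha0]; exact pow_le_pow_left₀ hη0 hηs 2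
  have hu0 : 0 ≤ y^2-x^2-η^2 := by linarith
  have hc2 : c^2 ≤ η^2 := pow_le_pow_left₀ hc hcη 2
  have huU : y^2-x^2-η^2 ≤ max (y^2-x^2-c^2) 0 := by
    apply le_trans _ (le_max_left _ _); linarith
  have hmu : max (y^2-x^2-d^2) 0 ≤ y^2-x^2-η^2 := by
    apply max_le _ hu0
    have : η^2 ≤ d^2 := pow_le_pow_left₀ hη0 hηd 2
    linarith
  have hm0 : (0:ℝ) ≤ max (y^2-x^2-d^2) 0 := le_max_right _ _
  have key : Gfun x y η = ((y^2-x^2-η^2) / ((y^2-x^2-η^2)^2 + 4*x^2*y^2))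
      * (2*η*(1/(Real.exp (2*π*η) - 1))) := by
    unfold Gfun; ring
  rw [key]
  apply mul_le_mul
  · apply div_le_div₀ (le_max_right _ 0) huU (by positivity)
    have : max (y^2-x^2-d^2) 0 ^2 ≤ (y^2-x^2-η^2)^2 := pow_le_pow_left₀ hm0 hmu 2
    linarith
  · exact hw
  · exact mul_nonneg (by linarith) (w_nonneg η hη0)
  · positivity

lemma piece (x y c d A B J θ : ℝ) (hx : 0 < x) (hy : 0 < y) (ha : x^2 < y^2)
    (hc : 0 ≤ c) (hcd : c ≤ d)
    (hInt : IntervalIntegrable (Gfun x y) MeasureTheory.volume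
      (min (Real.sqrt (y^2-x^2)) c) (min (Real.sqrt (y^2-x^2)) d))
    (hw : ∀ η, c ≤ η → 2*η*(1/(Real.exp (2*π*η) - 1)) ≤ (A*η+B) * Real.exp (-(2*π*η)))
    (hA : 0 ≤ A) (hB : 0 ≤ B) (hJ0 : 0 ≤ J)
    (hJ : ∫ η in c..d, (A*η+B) * Real.exp (-(2*π*η)) ≤ J)
    (hVJ : max (y^2-x^2-c^2) 0 / (max (y^2-x^2-d^2) 0 ^2 + 4*x^2*y^2) * J
      ≤ θ * (x/(2*(x^2+y^2)))) :
    ∫ η in (min (Real.sqrt (y^2-x^2)) c)..(min (Real.sqrt (y^2-x^2)) d), Gfun x y η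
      ≤ θ * (x/(2*(x^2+y^2))) := by
  set s := Real.sqrt (y^2-x^2) with hs
  set V := max (y^2-x^2-c^2) 0 / (max (y^2-x^2-d^2) 0 ^2 + 4*x^2*y^2) with hV
  have hV0 : 0 ≤ V := by positivity
  have hψc : Continuous (fun η : ℝ => V * ((A*η+B) * Real.exp (-(2*π*η)))) := by fun_prop
  rcases le_or_gt s c with hsc|hcs
  · have h1 : min s c = s := min_eq_left hsc
    have h2 : min s d = s := min_eq_left (hsc.trans hcd)
    rw [h1, h2, intervalIntegral.integral_same]
    exact le_trans (mul_nonneg hV0 hJ0) hVJ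
  · have h1 : min s c = c := min_eq_right hcs.le
    have hcr : c ≤ min s d := le_min hcs.le hcd
    have hrs : min s d ≤ s := min_le_left _ _
    have hrd : min s d ≤ d := min_le_right _ _
    rw [h1]; rw [h1] at hInt
    have step1 : ∫ η in c..(min s d), Gfun x y η
        ≤ ∫ η in c..(min s d), V * ((A*η+B) * Real.exp (-(2*π*η))) := by
      apply intervalIntegral.integral_mono_on hcr hInt
        (hψc.intervalIntegrable (μ := MeasureTheory.volume) _ _)
      intro η hη
      exact pointwise x y c d A B η hx hy hc hη.1 (hη.2.trans hrs) (hη.2.trans hrd) ha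
        (hw η hη.1)
    have step2 : ∫ η in c..(min s d), V * ((A*η+B) * Real.exp (-(2*π*η)))
        = V * ∫ η in c..(min s d), (A*η+B) * Real.exp (-(2*π*η)) :=
      intervalIntegral.integral_const_mul _ _
    have hcont : Continuous (fun η : ℝ => (A*η+B) * Real.exp (-(2*π*η))) := by fun_prop
    have step3 : ∫ η in c..(min s d), (A*η+B) * Real.exp (-(2*π*η))
        ≤ ∫ η in c..d, (A*η+B) * Real.exp (-(2*π*η)) := by
      have hadd := intervalIntegral.integral_add_adjacent_intervals
        (hcont.intervalIntegrable (μ := MeasureTheory.volume) c (min s d)) (hcont.intervalIntegrable (μ := MeasureTheory.volume) (min s d) d)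
      have htail : 0 ≤ ∫ η in (min s d)..d, (A*η+B) * Real.exp (-(2*π*η)) := by
        apply intervalIntegral.integral_nonneg hrd
        intro u hu
        have hu0 : 0 ≤ u := le_trans (le_trans hc hcr) hu.1
        positivity
      linarith
    calc ∫ η in c..(min s d), Gfun x y η
        ≤ V * ∫ η in c..(min s d), (A*η+B) * Real.exp (-(2*π*η)) := by
          rw [← step2]; exact step1
      _ ≤ V * ∫ η in c..d, (A*η+B) * Real.exp (-(2*π*η)) :=
          mul_le_mul_of_nonneg_left step3 hV0
      _ ≤ V * J := mul_le_mul_of_nonneg_left hJ hV0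
      _ ≤ θ * (x/(2*(x^2+y^2))) := hVJ


lemma JB0 : ∫ η in (0:ℝ)..((1/4):ℝ), (2*η+0.3184) * Real.exp (-(2*π*η)) ≤ 0.063923 := by
  have h := Jbound 2 0.3184 0.063923 0 1 (by norm_num) (by norm_num) (by norm_num)
  rw [show ((0:ℕ):ℝ)/4 = (0:ℝ) by norm_num, show ((1:ℕ):ℝ)/4 = ((1/4):ℝ) by norm_num] at h
  exact h

lemma JB1 : ∫ η in ((1/4):ℝ)..((1/2):ℝ), ((12641/5000)*η+0) * Real.exp (-(2*π*η)) ≤ 0.02305 := by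
  have h := Jbound (12641/5000) 0 0.02305 1 2 (by norm_num) (by norm_num) (by norm_num)
  rw [show ((1:ℕ):ℝ)/4 = ((1/4):ℝ) by norm_num, show ((2:ℕ):ℝ)/4 = ((1/2):ℝ) by norm_num] at h
  exact h

lemma JB2 : ∫ η in ((1/2):ℝ)..((3/4):ℝ), ((10457/5000)*η+0) * Real.exp (-(2*π*η)) ≤ 0.006899 := by
  have h := Jbound (10457/5000) 0 0.006899 2 3 (by norm_num) (by norm_num) (by norm_num)
  rw [show ((2:ℕ):ℝ)/4 = ((1/2):ℝ) by norm_num, show ((3:ℕ):ℝ)/4 = ((3/4):ℝ) by norm_num] at h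
  exact h

lemma JB3 : ∫ η in ((3/4):ℝ)..(1:ℝ), ((10093/5000)*η+0) * Real.exp (-(2*π*η)) ≤ 0.001982 := by
  have h := Jbound (10093/5000) 0 0.001982 3 4 (by norm_num) (by norm_num) (by norm_num)
  rw [show ((3:ℕ):ℝ)/4 = ((3/4):ℝ) by norm_num, show ((4:ℕ):ℝ)/4 = (1:ℝ) by norm_num] at h
  exact h

lemma JB4 : ∫ η in (1:ℝ)..((5/4):ℝ), ((501/250)*η+0) * Real.exp (-(2*π*η)) ≤ 0.000535 := by
  have h := Jbound (501/250) 0 0.000535 4 5 (by norm_num) (by norm_num) (by norm_num)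
  rw [show ((4:ℕ):ℝ)/4 = (1:ℝ) by norm_num, show ((5:ℕ):ℝ)/4 = ((5/4):ℝ) by norm_num] at h
  exact h

lemma JB5 : ∫ η in ((5/4):ℝ)..((3/2):ℝ), ((2501/1250)*η+0) * Real.exp (-(2*π*η)) ≤ 0.000138 := by
  have h := Jbound (2501/1250) 0 0.000138 5 6 (by norm_num) (by norm_num) (by norm_num)
  rw [show ((5:ℕ):ℝ)/4 = ((5/4):ℝ) by norm_num, show ((6:ℕ):ℝ)/4 = ((3/2):ℝ) by norm_num] at h
  exact h

lemma JB6 : ∫ η in ((3/2):ℝ)..(2:ℝ), ((10001/5000)*η+0) * Real.exp (-(2*π*η)) ≤ 0.000042 := by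
  have h := Jbound (10001/5000) 0 0.000042 6 8 (by norm_num) (by norm_num) (by norm_num)
  rw [show ((6:ℕ):ℝ)/4 = ((3/2):ℝ) by norm_num, show ((8:ℕ):ℝ)/4 = (2:ℝ) by norm_num] at h
  exact h

lemma JB7 : ∫ η in (2:ℝ)..(4:ℝ), ((10001/5000)*η+0) * Real.exp (-(2*π*η)) ≤ 0.000003 := by
  have h := Jbound (10001/5000) 0 0.000003 8 16 (by norm_num) (by norm_num) (by norm_num)
  rw [show ((8:ℕ):ℝ)/4 = (2:ℝ) by norm_num, show ((16:ℕ):ℝ)/4 = (4:ℝ) by norm_num] at h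
  exact h

lemma fin0 (x y : ℝ) (hx : 1/4 ≤ x) (hxy : x < y) (h2 : x^2+y^2 < 16) :
    max (y^2-x^2-0^2) 0 / (max (y^2-x^2-(1/4)^2) 0 ^2 + 4*x^2*y^2) * 0.063923
      ≤ 0.53 * (x/(2*(x^2+y^2))) := by
  have hx0 : 0 < x := lt_of_lt_of_le (by norm_num) hx
  have hy0 : 0 < y := hx0.trans hxy
  have hax : 0 < y^2-x^2 := by nlinarith
  have hx2 : (1:ℝ)/16 ≤ x^2 := by nlinarith
  obtain ⟨a, haa⟩ : ∃ a, a = y^2-x^2 := ⟨_, rfl⟩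
  have hy2 : y^2 = a+x^2 := by rw [haa]; ring
  rw [← haa, hy2]
  rw [hy2] at h2
  rw [← haa] at hax
  clear haa hy2 hxy hy0
  have hxa : (0:ℝ) < a+x^2 := by nlinarith
  have hb : (0:ℝ) < 4*x^2*(a+x^2) := by positivity
  have hden : (0:ℝ) < max (a-(1/4)^2) 0 ^2 + 4*x^2*(a+x^2) := by
    have := sq_nonneg (max (a-(1/4)^2) 0)
    linarith
  have hS : (0:ℝ) < 2*(x^2+(a+x^2)) := by linarith
  rw [show (0.53:ℝ) * (x/(2*(x^2+(a+x^2)))) = (0.53*x)/(2*(x^2+(a+x^2))) by ring,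
    div_mul_eq_mul_div, div_le_div_iff₀ hden hS]
  rcases le_total (a-0^2) 0 with hn|hn
  · rw [max_eq_right hn]
    have h9 : (0:ℝ) ≤ 0.53*x*(max (a-(1/4)^2) 0 ^2 + 4*x^2*(a+x^2)) := by positivity
    nlinarith [h9]
  · rw [max_eq_left hn]
    rcases le_total (a-(1/4)^2) 0 with hm|hm
    · rw [max_eq_right hm]
      nlinarith [mul_nonneg (sub_nonneg.2 hx) (sq_nonneg (a-0^2)),
        mul_nonneg (mul_nonneg (sub_nonneg.2 hx) (sq_nonneg x)) hax.le,
        mul_nonneg (sub_nonneg.2 hx2) hax.le,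
        mul_nonneg (sub_nonneg.2 hx2) hn,
        mul_nonneg (mul_nonneg (sub_nonneg.2 hx) (sq_nonneg x)) (sq_nonneg x),
        sq_nonneg a, hax.le]
    · rw [max_eq_left hm]
      nlinarith [mul_nonneg (sub_nonneg.2 hx) (sq_nonneg (a-(1/4)^2)),
        mul_nonneg (mul_nonneg (sub_nonneg.2 hx) (sq_nonneg x)) hax.le,
        mul_nonneg (sub_nonneg.2 hx2) hax.le,
        mul_nonneg (sub_nonneg.2 hx2) (sub_nonneg.2 hm),
        mul_nonneg (sub_nonneg.2 hx2) hn,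
        mul_nonneg (sub_nonneg.2 hm) hax.le,
        mul_nonneg (mul_nonneg (sub_nonneg.2 hx) (sq_nonneg x)) (sq_nonneg x),
        sq_nonneg a, hax.le, sq_nonneg (a-(1/4)^2)]

lemma fin1 (x y : ℝ) (hx : 1/4 ≤ x) (hxy : x < y) (h2 : x^2+y^2 < 16) :
    max (y^2-x^2-(1/4)^2) 0 / (max (y^2-x^2-(1/2)^2) 0 ^2 + 4*x^2*y^2) * 0.02305
      ≤ 0.27 * (x/(2*(x^2+y^2))) := by
  have hx0 : 0 < x := lt_of_lt_of_le (by norm_num) hx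
  have hy0 : 0 < y := hx0.trans hxy
  have hax : 0 < y^2-x^2 := by nlinarith
  have hx2 : (1:ℝ)/16 ≤ x^2 := by nlinarith
  obtain ⟨a, haa⟩ : ∃ a, a = y^2-x^2 := ⟨_, rfl⟩
  have hy2 : y^2 = a+x^2 := by rw [haa]; ring
  rw [← haa, hy2]
  rw [hy2] at h2
  rw [← haa] at hax
  clear haa hy2 hxy hy0
  have hxa : (0:ℝ) < a+x^2 := by nlinarith
  have hb : (0:ℝ) < 4*x^2*(a+x^2) := by positivity
  have hden : (0:ℝ) < max (a-(1/2)^2) 0 ^2 + 4*x^2*(a+x^2) := by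
    have := sq_nonneg (max (a-(1/2)^2) 0)
    linarith
  have hS : (0:ℝ) < 2*(x^2+(a+x^2)) := by linarith
  rw [show (0.27:ℝ) * (x/(2*(x^2+(a+x^2)))) = (0.27*x)/(2*(x^2+(a+x^2))) by ring,
    div_mul_eq_mul_div, div_le_div_iff₀ hden hS]
  rcases le_total (a-(1/4)^2) 0 with hn|hn
  · rw [max_eq_right hn]
    have h9 : (0:ℝ) ≤ 0.27*x*(max (a-(1/2)^2) 0 ^2 + 4*x^2*(a+x^2)) := by positivity
    nlinarith [h9]
  · rw [max_eq_left hn]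
    rcases le_total (a-(1/2)^2) 0 with hm|hm
    · rw [max_eq_right hm]
      nlinarith [mul_nonneg (sub_nonneg.2 hx) (sq_nonneg (a-(1/4)^2)),
        mul_nonneg (mul_nonneg (sub_nonneg.2 hx) (sq_nonneg x)) hax.le,
        mul_nonneg (sub_nonneg.2 hx2) hax.le,
        mul_nonneg (sub_nonneg.2 hx2) hn,
        mul_nonneg (mul_nonneg (sub_nonneg.2 hx) (sq_nonneg x)) (sq_nonneg x),
        sq_nonneg a, hax.le]
    · rw [max_eq_left hm]
      nlinarith [mul_nonneg (sub_nonneg.2 hx) (sq_nonneg (a-(1/2)^2)),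
        mul_nonneg (mul_nonneg (sub_nonneg.2 hx) (sq_nonneg x)) hax.le,
        mul_nonneg (sub_nonneg.2 hx2) hax.le,
        mul_nonneg (sub_nonneg.2 hx2) (sub_nonneg.2 hm),
        mul_nonneg (sub_nonneg.2 hx2) hn,
        mul_nonneg (sub_nonneg.2 hm) hax.le,
        mul_nonneg (mul_nonneg (sub_nonneg.2 hx) (sq_nonneg x)) (sq_nonneg x),
        sq_nonneg a, hax.le, sq_nonneg (a-(1/2)^2)]

lemma hEc1 : Real.exp (-(2*π*((1/4):ℝ))) ≤ (0.2089:ℝ)^1 := by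
  have h2 : Real.exp (-(2*π*((1/4):ℝ))) = Real.exp (-(π/2))^1 := by
    rw [← exp_grid 1]; norm_num
  rw [h2]
  exact pow_le_pow_left₀ (Real.exp_nonneg _) exp_half_pi_bounds.2 1

lemma fin2 (x y : ℝ) (hx : 1/4 ≤ x) (hxy : x < y) (h2 : x^2+y^2 < 16) :
    max (y^2-x^2-(1/2)^2) 0 / (max (y^2-x^2-(3/4)^2) 0 ^2 + 4*x^2*y^2) * 0.006899
      ≤ 0.115 * (x/(2*(x^2+y^2))) := by
  have hx0 : 0 < x := lt_of_lt_of_le (by norm_num) hx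
  have hy0 : 0 < y := hx0.trans hxy
  have hax : 0 < y^2-x^2 := by nlinarith
  have hx2 : (1:ℝ)/16 ≤ x^2 := by nlinarith
  obtain ⟨a, haa⟩ : ∃ a, a = y^2-x^2 := ⟨_, rfl⟩
  have hy2 : y^2 = a+x^2 := by rw [haa]; ring
  rw [← haa, hy2]
  rw [hy2] at h2
  rw [← haa] at hax
  clear haa hy2 hxy hy0
  have hxa : (0:ℝ) < a+x^2 := by nlinarith
  have hb : (0:ℝ) < 4*x^2*(a+x^2) := by positivity
  have hden : (0:ℝ) < max (a-(3/4)^2) 0 ^2 + 4*x^2*(a+x^2) := by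
    have := sq_nonneg (max (a-(3/4)^2) 0)
    linarith
  have hS : (0:ℝ) < 2*(x^2+(a+x^2)) := by linarith
  rw [show (0.115:ℝ) * (x/(2*(x^2+(a+x^2)))) = (0.115*x)/(2*(x^2+(a+x^2))) by ring,
    div_mul_eq_mul_div, div_le_div_iff₀ hden hS]
  rcases le_total (a-(1/2)^2) 0 with hn|hn
  · rw [max_eq_right hn]
    have h9 : (0:ℝ) ≤ 0.115*x*(max (a-(3/4)^2) 0 ^2 + 4*x^2*(a+x^2)) := by positivity
    nlinarith [h9]
  · rw [max_eq_left hn]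
    rcases le_total (a-(3/4)^2) 0 with hm|hm
    · rw [max_eq_right hm]
      nlinarith [mul_nonneg (sub_nonneg.2 hx) (sq_nonneg (a-(1/2)^2)),
        mul_nonneg (mul_nonneg (sub_nonneg.2 hx) (sq_nonneg x)) hax.le,
        mul_nonneg (sub_nonneg.2 hx2) hax.le,
        mul_nonneg (sub_nonneg.2 hx2) hn,
        mul_nonneg (mul_nonneg (sub_nonneg.2 hx) (sq_nonneg x)) (sq_nonneg x),
        sq_nonneg a, hax.le]
    · rw [max_eq_left hm]
      nlinarith [mul_nonneg (sub_nonneg.2 hx) (sq_nonneg (a-(3/4)^2)),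
        mul_nonneg (mul_nonneg (sub_nonneg.2 hx) (sq_nonneg x)) hax.le,
        mul_nonneg (sub_nonneg.2 hx2) hax.le,
        mul_nonneg (sub_nonneg.2 hx2) (sub_nonneg.2 hm),
        mul_nonneg (sub_nonneg.2 hx2) hn,
        mul_nonneg (sub_nonneg.2 hm) hax.le,
        mul_nonneg (mul_nonneg (sub_nonneg.2 hx) (sq_nonneg x)) (sq_nonneg x),
        sq_nonneg a, hax.le, sq_nonneg (a-(3/4)^2)]

lemma hEc2 : Real.exp (-(2*π*((1/2):ℝ))) ≤ (0.2089:ℝ)^2 := by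
  have h2 : Real.exp (-(2*π*((1/2):ℝ))) = Real.exp (-(π/2))^2 := by
    rw [← exp_grid 2]; norm_num
  rw [h2]
  exact pow_le_pow_left₀ (Real.exp_nonneg _) exp_half_pi_bounds.2 2

lemma fin3 (x y : ℝ) (hx : 1/4 ≤ x) (hxy : x < y) (h2 : x^2+y^2 < 16) :
    max (y^2-x^2-(3/4)^2) 0 / (max (y^2-x^2-1^2) 0 ^2 + 4*x^2*y^2) * 0.001982
      ≤ 0.045 * (x/(2*(x^2+y^2))) := by
  have hx0 : 0 < x := lt_of_lt_of_le (by norm_num) hx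
  have hy0 : 0 < y := hx0.trans hxy
  have hax : 0 < y^2-x^2 := by nlinarith
  have hx2 : (1:ℝ)/16 ≤ x^2 := by nlinarith
  obtain ⟨a, haa⟩ : ∃ a, a = y^2-x^2 := ⟨_, rfl⟩
  have hy2 : y^2 = a+x^2 := by rw [haa]; ring
  rw [← haa, hy2]
  rw [hy2] at h2
  rw [← haa] at hax
  clear haa hy2 hxy hy0
  have hxa : (0:ℝ) < a+x^2 := by nlinarith
  have hb : (0:ℝ) < 4*x^2*(a+x^2) := by positivity
  have hden : (0:ℝ) < max (a-1^2) 0 ^2 + 4*x^2*(a+x^2) := by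
    have := sq_nonneg (max (a-1^2) 0)
    linarith
  have hS : (0:ℝ) < 2*(x^2+(a+x^2)) := by linarith
  rw [show (0.045:ℝ) * (x/(2*(x^2+(a+x^2)))) = (0.045*x)/(2*(x^2+(a+x^2))) by ring,
    div_mul_eq_mul_div, div_le_div_iff₀ hden hS]
  rcases le_total (a-(3/4)^2) 0 with hn|hn
  · rw [max_eq_right hn]
    have h9 : (0:ℝ) ≤ 0.045*x*(max (a-1^2) 0 ^2 + 4*x^2*(a+x^2)) := by positivity
    nlinarith [h9]
  · rw [max_eq_left hn]
    rcases le_total (a-1^2) 0 with hm|hm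
    · rw [max_eq_right hm]
      nlinarith [mul_nonneg (sub_nonneg.2 hx) (sq_nonneg (a-(3/4)^2)),
        mul_nonneg (mul_nonneg (sub_nonneg.2 hx) (sq_nonneg x)) hax.le,
        mul_nonneg (sub_nonneg.2 hx2) hax.le,
        mul_nonneg (sub_nonneg.2 hx2) hn,
        mul_nonneg (mul_nonneg (sub_nonneg.2 hx) (sq_nonneg x)) (sq_nonneg x),
        sq_nonneg a, hax.le]
    · rw [max_eq_left hm]
      nlinarith [mul_nonneg (sub_nonneg.2 hx) (sq_nonneg (a-1^2)),
        mul_nonneg (mul_nonneg (sub_nonneg.2 hx) (sq_nonneg x)) hax.le,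
        mul_nonneg (sub_nonneg.2 hx2) hax.le,
        mul_nonneg (sub_nonneg.2 hx2) (sub_nonneg.2 hm),
        mul_nonneg (sub_nonneg.2 hx2) hn,
        mul_nonneg (sub_nonneg.2 hm) hax.le,
        mul_nonneg (mul_nonneg (sub_nonneg.2 hx) (sq_nonneg x)) (sq_nonneg x),
        sq_nonneg a, hax.le, sq_nonneg (a-1^2)]

lemma hEc3 : Real.exp (-(2*π*((3/4):ℝ))) ≤ (0.2089:ℝ)^3 := by
  have h2 : Real.exp (-(2*π*((3/4):ℝ))) = Real.exp (-(π/2))^3 := by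
    rw [← exp_grid 3]; norm_num
  rw [h2]
  exact pow_le_pow_left₀ (Real.exp_nonneg _) exp_half_pi_bounds.2 3

lemma fin4 (x y : ℝ) (hx : 1/4 ≤ x) (hxy : x < y) (h2 : x^2+y^2 < 16) :
    max (y^2-x^2-1^2) 0 / (max (y^2-x^2-(5/4)^2) 0 ^2 + 4*x^2*y^2) * 0.000535
      ≤ 0.016 * (x/(2*(x^2+y^2))) := by
  have hx0 : 0 < x := lt_of_lt_of_le (by norm_num) hx
  have hy0 : 0 < y := hx0.trans hxy
  have hax : 0 < y^2-x^2 := by nlinarith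
  have hx2 : (1:ℝ)/16 ≤ x^2 := by nlinarith
  obtain ⟨a, haa⟩ : ∃ a, a = y^2-x^2 := ⟨_, rfl⟩
  have hy2 : y^2 = a+x^2 := by rw [haa]; ring
  rw [← haa, hy2]
  rw [hy2] at h2
  rw [← haa] at hax
  clear haa hy2 hxy hy0
  have hxa : (0:ℝ) < a+x^2 := by nlinarith
  have hb : (0:ℝ) < 4*x^2*(a+x^2) := by positivity
  have hden : (0:ℝ) < max (a-(5/4)^2) 0 ^2 + 4*x^2*(a+x^2) := by
    have := sq_nonneg (max (a-(5/4)^2) 0)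
    linarith
  have hS : (0:ℝ) < 2*(x^2+(a+x^2)) := by linarith
  rw [show (0.016:ℝ) * (x/(2*(x^2+(a+x^2)))) = (0.016*x)/(2*(x^2+(a+x^2))) by ring,
    div_mul_eq_mul_div, div_le_div_iff₀ hden hS]
  rcases le_total (a-1^2) 0 with hn|hn
  · rw [max_eq_right hn]
    have h9 : (0:ℝ) ≤ 0.016*x*(max (a-(5/4)^2) 0 ^2 + 4*x^2*(a+x^2)) := by positivity
    nlinarith [h9]
  · rw [max_eq_left hn]
    rcases le_total (a-(5/4)^2) 0 with hm|hm
    · rw [max_eq_right hm]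
      nlinarith [mul_nonneg (sub_nonneg.2 hx) (sq_nonneg (a-1^2)),
        mul_nonneg (mul_nonneg (sub_nonneg.2 hx) (sq_nonneg x)) hax.le,
        mul_nonneg (sub_nonneg.2 hx2) hax.le,
        mul_nonneg (sub_nonneg.2 hx2) hn,
        mul_nonneg (mul_nonneg (sub_nonneg.2 hx) (sq_nonneg x)) (sq_nonneg x),
        sq_nonneg a, hax.le]
    · rw [max_eq_left hm]
      nlinarith [mul_nonneg (sub_nonneg.2 hx) (sq_nonneg (a-(5/4)^2)),
        mul_nonneg (mul_nonneg (sub_nonneg.2 hx) (sq_nonneg x)) hax.le,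
        mul_nonneg (sub_nonneg.2 hx2) hax.le,
        mul_nonneg (sub_nonneg.2 hx2) (sub_nonneg.2 hm),
        mul_nonneg (sub_nonneg.2 hx2) hn,
        mul_nonneg (sub_nonneg.2 hm) hax.le,
        mul_nonneg (mul_nonneg (sub_nonneg.2 hx) (sq_nonneg x)) (sq_nonneg x),
        sq_nonneg a, hax.le, sq_nonneg (a-(5/4)^2)]

lemma hEc4 : Real.exp (-(2*π*(1:ℝ))) ≤ (0.2089:ℝ)^4 := by
  have h2 : Real.exp (-(2*π*(1:ℝ))) = Real.exp (-(π/2))^4 := by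
    rw [← exp_grid 4]; norm_num
  rw [h2]
  exact pow_le_pow_left₀ (Real.exp_nonneg _) exp_half_pi_bounds.2 4

lemma fin5 (x y : ℝ) (hx : 1/4 ≤ x) (hxy : x < y) (h2 : x^2+y^2 < 16) :
    max (y^2-x^2-(5/4)^2) 0 / (max (y^2-x^2-(3/2)^2) 0 ^2 + 4*x^2*y^2) * 0.000138
      ≤ 0.006 * (x/(2*(x^2+y^2))) := by
  have hx0 : 0 < x := lt_of_lt_of_le (by norm_num) hx
  have hy0 : 0 < y := hx0.trans hxy
  have hax : 0 < y^2-x^2 := by nlinarith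
  have hx2 : (1:ℝ)/16 ≤ x^2 := by nlinarith
  obtain ⟨a, haa⟩ : ∃ a, a = y^2-x^2 := ⟨_, rfl⟩
  have hy2 : y^2 = a+x^2 := by rw [haa]; ring
  rw [← haa, hy2]
  rw [hy2] at h2
  rw [← haa] at hax
  clear haa hy2 hxy hy0
  have hxa : (0:ℝ) < a+x^2 := by nlinarith
  have hb : (0:ℝ) < 4*x^2*(a+x^2) := by positivity
  have hden : (0:ℝ) < max (a-(3/2)^2) 0 ^2 + 4*x^2*(a+x^2) := by
    have := sq_nonneg (max (a-(3/2)^2) 0)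
    linarith
  have hS : (0:ℝ) < 2*(x^2+(a+x^2)) := by linarith
  rw [show (0.006:ℝ) * (x/(2*(x^2+(a+x^2)))) = (0.006*x)/(2*(x^2+(a+x^2))) by ring,
    div_mul_eq_mul_div, div_le_div_iff₀ hden hS]
  rcases le_total (a-(5/4)^2) 0 with hn|hn
  · rw [max_eq_right hn]
    have h9 : (0:ℝ) ≤ 0.006*x*(max (a-(3/2)^2) 0 ^2 + 4*x^2*(a+x^2)) := by positivity
    nlinarith [h9]
  · rw [max_eq_left hn]
    rcases le_total (a-(3/2)^2) 0 with hm|hm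
    · rw [max_eq_right hm]
      nlinarith [mul_nonneg (sub_nonneg.2 hx) (sq_nonneg (a-(5/4)^2)),
        mul_nonneg (mul_nonneg (sub_nonneg.2 hx) (sq_nonneg x)) hax.le,
        mul_nonneg (sub_nonneg.2 hx2) hax.le,
        mul_nonneg (sub_nonneg.2 hx2) hn,
        mul_nonneg (mul_nonneg (sub_nonneg.2 hx) (sq_nonneg x)) (sq_nonneg x),
        sq_nonneg a, hax.le]
    · rw [max_eq_left hm]
      nlinarith [mul_nonneg (sub_nonneg.2 hx) (sq_nonneg (a-(3/2)^2)),
        mul_nonneg (mul_nonneg (sub_nonneg.2 hx) (sq_nonneg x)) hax.le,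
        mul_nonneg (sub_nonneg.2 hx2) hax.le,
        mul_nonneg (sub_nonneg.2 hx2) (sub_nonneg.2 hm),
        mul_nonneg (sub_nonneg.2 hx2) hn,
        mul_nonneg (sub_nonneg.2 hm) hax.le,
        mul_nonneg (mul_nonneg (sub_nonneg.2 hx) (sq_nonneg x)) (sq_nonneg x),
        sq_nonneg a, hax.le, sq_nonneg (a-(3/2)^2)]

lemma hEc5 : Real.exp (-(2*π*((5/4):ℝ))) ≤ (0.2089:ℝ)^5 := by
  have h2 : Real.exp (-(2*π*((5/4):ℝ))) = Real.exp (-(π/2))^5 := by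
    rw [← exp_grid 5]; norm_num
  rw [h2]
  exact pow_le_pow_left₀ (Real.exp_nonneg _) exp_half_pi_bounds.2 5

lemma fin6 (x y : ℝ) (hx : 1/4 ≤ x) (hxy : x < y) (h2 : x^2+y^2 < 16) :
    max (y^2-x^2-(3/2)^2) 0 / (max (y^2-x^2-2^2) 0 ^2 + 4*x^2*y^2) * 0.000042
      ≤ 0.005 * (x/(2*(x^2+y^2))) := by
  have hx0 : 0 < x := lt_of_lt_of_le (by norm_num) hx
  have hy0 : 0 < y := hx0.trans hxy
  have hax : 0 < y^2-x^2 := by nlinarith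
  have hx2 : (1:ℝ)/16 ≤ x^2 := by nlinarith
  obtain ⟨a, haa⟩ : ∃ a, a = y^2-x^2 := ⟨_, rfl⟩
  have hy2 : y^2 = a+x^2 := by rw [haa]; ring
  rw [← haa, hy2]
  rw [hy2] at h2
  rw [← haa] at hax
  clear haa hy2 hxy hy0
  have hxa : (0:ℝ) < a+x^2 := by nlinarith
  have hb : (0:ℝ) < 4*x^2*(a+x^2) := by positivity
  have hden : (0:ℝ) < max (a-2^2) 0 ^2 + 4*x^2*(a+x^2) := by
    have := sq_nonneg (max (a-2^2) 0)
    linarith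
  have hS : (0:ℝ) < 2*(x^2+(a+x^2)) := by linarith
  rw [show (0.005:ℝ) * (x/(2*(x^2+(a+x^2)))) = (0.005*x)/(2*(x^2+(a+x^2))) by ring,
    div_mul_eq_mul_div, div_le_div_iff₀ hden hS]
  rcases le_total (a-(3/2)^2) 0 with hn|hn
  · rw [max_eq_right hn]
    have h9 : (0:ℝ) ≤ 0.005*x*(max (a-2^2) 0 ^2 + 4*x^2*(a+x^2)) := by positivity
    nlinarith [h9]
  · rw [max_eq_left hn]
    rcases le_total (a-2^2) 0 with hm|hm
    · rw [max_eq_right hm]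
      nlinarith [mul_nonneg (sub_nonneg.2 hx) (sq_nonneg (a-(3/2)^2)),
        mul_nonneg (mul_nonneg (sub_nonneg.2 hx) (sq_nonneg x)) hax.le,
        mul_nonneg (sub_nonneg.2 hx2) hax.le,
        mul_nonneg (sub_nonneg.2 hx2) hn,
        mul_nonneg (mul_nonneg (sub_nonneg.2 hx) (sq_nonneg x)) (sq_nonneg x),
        sq_nonneg a, hax.le]
    · rw [max_eq_left hm]
      nlinarith [mul_nonneg (sub_nonneg.2 hx) (sq_nonneg (a-2^2)),
        mul_nonneg (mul_nonneg (sub_nonneg.2 hx) (sq_nonneg x)) hax.le,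
        mul_nonneg (sub_nonneg.2 hx2) hax.le,
        mul_nonneg (sub_nonneg.2 hx2) (sub_nonneg.2 hm),
        mul_nonneg (sub_nonneg.2 hx2) hn,
        mul_nonneg (sub_nonneg.2 hm) hax.le,
        mul_nonneg (mul_nonneg (sub_nonneg.2 hx) (sq_nonneg x)) (sq_nonneg x),
        sq_nonneg a, hax.le, sq_nonneg (a-2^2)]

lemma hEc6 : Real.exp (-(2*π*((3/2):ℝ))) ≤ (0.2089:ℝ)^6 := by
  have h2 : Real.exp (-(2*π*((3/2):ℝ))) = Real.exp (-(π/2))^6 := by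
    rw [← exp_grid 6]; norm_num
  rw [h2]
  exact pow_le_pow_left₀ (Real.exp_nonneg _) exp_half_pi_bounds.2 6

lemma fin7 (x y : ℝ) (hx : 1/4 ≤ x) (hxy : x < y) (h2 : x^2+y^2 < 16) :
    max (y^2-x^2-2^2) 0 / (max (y^2-x^2-4^2) 0 ^2 + 4*x^2*y^2) * 0.000003
      ≤ 0.006 * (x/(2*(x^2+y^2))) := by
  have hx0 : 0 < x := lt_of_lt_of_le (by norm_num) hx
  have hy0 : 0 < y := hx0.trans hxy
  have hax : 0 < y^2-x^2 := by nlinarith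
  have hx2 : (1:ℝ)/16 ≤ x^2 := by nlinarith
  obtain ⟨a, haa⟩ : ∃ a, a = y^2-x^2 := ⟨_, rfl⟩
  have hy2 : y^2 = a+x^2 := by rw [haa]; ring
  rw [← haa, hy2]
  rw [hy2] at h2
  rw [← haa] at hax
  clear haa hy2 hxy hy0
  have hxa : (0:ℝ) < a+x^2 := by nlinarith
  have hb : (0:ℝ) < 4*x^2*(a+x^2) := by positivity
  have hden : (0:ℝ) < max (a-4^2) 0 ^2 + 4*x^2*(a+x^2) := by
    have := sq_nonneg (max (a-4^2) 0)
    linarith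
  have hS : (0:ℝ) < 2*(x^2+(a+x^2)) := by linarith
  rw [show (0.006:ℝ) * (x/(2*(x^2+(a+x^2)))) = (0.006*x)/(2*(x^2+(a+x^2))) by ring,
    div_mul_eq_mul_div, div_le_div_iff₀ hden hS]
  rcases le_total (a-2^2) 0 with hn|hn
  · rw [max_eq_right hn]
    have h9 : (0:ℝ) ≤ 0.006*x*(max (a-4^2) 0 ^2 + 4*x^2*(a+x^2)) := by positivity
    nlinarith [h9]
  · rw [max_eq_left hn]
    rcases le_total (a-4^2) 0 with hm|hm
    · rw [max_eq_right hm]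
      nlinarith [mul_nonneg (sub_nonneg.2 hx) (sq_nonneg (a-2^2)),
        mul_nonneg (mul_nonneg (sub_nonneg.2 hx) (sq_nonneg x)) hax.le,
        mul_nonneg (sub_nonneg.2 hx2) hax.le,
        mul_nonneg (sub_nonneg.2 hx2) hn,
        mul_nonneg (mul_nonneg (sub_nonneg.2 hx) (sq_nonneg x)) (sq_nonneg x),
        sq_nonneg a, hax.le]
    · rw [max_eq_left hm]
      nlinarith [mul_nonneg (sub_nonneg.2 hx) (sq_nonneg (a-4^2)),
        mul_nonneg (mul_nonneg (sub_nonneg.2 hx) (sq_nonneg x)) hax.le,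
        mul_nonneg (sub_nonneg.2 hx2) hax.le,
        mul_nonneg (sub_nonneg.2 hx2) (sub_nonneg.2 hm),
        mul_nonneg (sub_nonneg.2 hx2) hn,
        mul_nonneg (sub_nonneg.2 hm) hax.le,
        mul_nonneg (mul_nonneg (sub_nonneg.2 hx) (sq_nonneg x)) (sq_nonneg x),
        sq_nonneg a, hax.le, sq_nonneg (a-4^2)]

lemma hEc7 : Real.exp (-(2*π*(2:ℝ))) ≤ (0.2089:ℝ)^8 := by
  have h2 : Real.exp (-(2*π*(2:ℝ))) = Real.exp (-(π/2))^8 := by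
    rw [← exp_grid 8]; norm_num
  rw [h2]
  exact pow_le_pow_left₀ (Real.exp_nonneg _) exp_half_pi_bounds.2 8


end BinetAux

open BinetAux in
/-- Let `x, y` be real with `x ≥ 1/4`, `y ≥ 0`, `y² > x²`, and
`x² + y² < 16`. Then
`-x/(2(x²+y²)) - ∫₀^{√(y²-x²)} (2η(η²+x²-y²)/((η²+x²-y²)² + 4x²y²))·dη/(e^{2πη}-1) ≤ 0`. -/
theorem binet_small_z_inequality (x y : ℝ) (hx : 1 / 4 ≤ x) (hy : 0 ≤ y)
    (h1 : x ^ 2 < y ^ 2) (h2 : x ^ 2 + y ^ 2 < 16) :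
    -x / (2 * (x ^ 2 + y ^ 2)) -
      ∫ η in (0 : ℝ)..Real.sqrt (y ^ 2 - x ^ 2),
        (2 * η * (η ^ 2 + x ^ 2 - y ^ 2) /
          ((η ^ 2 + x ^ 2 - y ^ 2) ^ 2 + 4 * x ^ 2 * y ^ 2)) *
          (1 / (Real.exp (2 * Real.pi * η) - 1)) ≤ 0 := by
  have hx0 : 0 < x := lt_of_lt_of_le (by norm_num) hx
  have hxy : x < y := by nlinarith
  have hy0 : 0 < y := hx0.trans hxy
  set s := Real.sqrt (y^2-x^2) with hsdef
  have hs0 : 0 ≤ s := Real.sqrt_nonneg _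
  have hs4 : s ≤ 4 := by
    rw [hsdef, show (4:ℝ) = Real.sqrt 16 by
      rw [show (16:ℝ) = 4^2 by norm_num, Real.sqrt_sq (by norm_num : (0:ℝ) ≤ 4)]]
    exact Real.sqrt_le_sqrt (by nlinarith)
  have hX0 : 0 ≤ x/(2*(x^2+y^2)) := by positivity
  have hcongr : (∫ η in (0:ℝ)..s,
        (2 * η * (η ^ 2 + x ^ 2 - y ^ 2) /
          ((η ^ 2 + x ^ 2 - y ^ 2) ^ 2 + 4 * x ^ 2 * y ^ 2)) *
          (1 / (Real.exp (2 * Real.pi * η) - 1)))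
      = - ∫ η in (0:ℝ)..s, Gfun x y η := by
    rw [← intervalIntegral.integral_neg]
    apply intervalIntegral.integral_congr
    intro η _
    show _ = -(Gfun x y η)
    unfold Gfun
    ring
  rw [hcongr, show -x / (2 * (x ^ 2 + y ^ 2)) = -(x / (2 * (x ^ 2 + y ^ 2))) by ring]
  have main : ∫ η in (0:ℝ)..s, Gfun x y η ≤ x/(2*(x^2+y^2)) := by
    by_cases hInt : IntervalIntegrable (Gfun x y) MeasureTheory.volume 0 s
    case neg =>
      rw [intervalIntegral.integral_undef hInt]
      exact hX0
    case pos =>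
      have hmem : ∀ c : ℝ, 0 ≤ c → min s c ∈ Set.uIcc (0:ℝ) s := by
        intro c hc
        rw [Set.uIcc_of_le hs0]
        exact ⟨le_min hs0 hc, min_le_left _ _⟩
      have hI : ∀ c d : ℝ, 0 ≤ c → 0 ≤ d →
          IntervalIntegrable (Gfun x y) MeasureTheory.volume (min s c) (min s d) := by
        intro c d hc hd
        exact hInt.mono_set (Set.uIcc_subset_uIcc (hmem c hc) (hmem d hd))
      have m0 : min s 0 = 0 := min_eq_right hs0
      have m8 : min s 4 = s := min_eq_left hs4
      have P0 := piece x y 0 (1/4) 2 0.3184 0.063923 0.53 hx0 hy0 h1 le_rfl (by norm_num)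
        (hI 0 (1/4) le_rfl (by norm_num)) (fun η hη => w0_bound η hη)
        (by norm_num) (by norm_num) (by norm_num) JB0 (fin0 x y hx hxy h2)
      have P1 := piece x y (1/4) (1/2) (12641/5000) 0 0.02305 0.27 hx0 hy0 h1
        (by norm_num) (by norm_num) (hI (1/4) (1/2) (by norm_num) (by norm_num))
        (fun η hη => wK_bound (12641/5000) (1/4) ((0.2089:ℝ)^1) η (by norm_num) hη hEc1
          (by norm_num) (by norm_num))
        (by norm_num) (by norm_num) (by norm_num) JB1 (fin1 x y hx hxy h2)
      have P2 := piece x y (1/2) (3/4) (10457/5000) 0 0.006899 0.115 hx0 hy0 h1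
        (by norm_num) (by norm_num) (hI (1/2) (3/4) (by norm_num) (by norm_num))
        (fun η hη => wK_bound (10457/5000) (1/2) ((0.2089:ℝ)^2) η (by norm_num) hη hEc2
          (by norm_num) (by norm_num))
        (by norm_num) (by norm_num) (by norm_num) JB2 (fin2 x y hx hxy h2)
      have P3 := piece x y (3/4) 1 (10093/5000) 0 0.001982 0.045 hx0 hy0 h1
        (by norm_num) (by norm_num) (hI (3/4) 1 (by norm_num) (by norm_num))
        (fun η hη => wK_bound (10093/5000) (3/4) ((0.2089:ℝ)^3) η (by norm_num) hη hEc3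
          (by norm_num) (by norm_num))
        (by norm_num) (by norm_num) (by norm_num) JB3 (fin3 x y hx hxy h2)
      have P4 := piece x y 1 (5/4) (501/250) 0 0.000535 0.016 hx0 hy0 h1
        (by norm_num) (by norm_num) (hI 1 (5/4) (by norm_num) (by norm_num))
        (fun η hη => wK_bound (501/250) 1 ((0.2089:ℝ)^4) η (by norm_num) hη hEc4
          (by norm_num) (by norm_num))
        (by norm_num) (by norm_num) (by norm_num) JB4 (fin4 x y hx hxy h2)
      have P5 := piece x y (5/4) (3/2) (2501/1250) 0 0.000138 0.006 hx0 hy0 h1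
        (by norm_num) (by norm_num) (hI (5/4) (3/2) (by norm_num) (by norm_num))
        (fun η hη => wK_bound (2501/1250) (5/4) ((0.2089:ℝ)^5) η (by norm_num) hη hEc5
          (by norm_num) (by norm_num))
        (by norm_num) (by norm_num) (by norm_num) JB5 (fin5 x y hx hxy h2)
      have P6 := piece x y (3/2) 2 (10001/5000) 0 0.000042 0.005 hx0 hy0 h1
        (by norm_num) (by norm_num) (hI (3/2) 2 (by norm_num) (by norm_num))
        (fun η hη => wK_bound (10001/5000) (3/2) ((0.2089:ℝ)^6) η (by norm_num) hη hEc6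
          (by norm_num) (by norm_num))
        (by norm_num) (by norm_num) (by norm_num) JB6 (fin6 x y hx hxy h2)
      have P7 := piece x y 2 4 (10001/5000) 0 0.000003 0.006 hx0 hy0 h1
        (by norm_num) (by norm_num) (hI 2 4 (by norm_num) (by norm_num))
        (fun η hη => wK_bound (10001/5000) 2 ((0.2089:ℝ)^8) η (by norm_num) hη hEc7
          (by norm_num) (by norm_num))
        (by norm_num) (by norm_num) (by norm_num) JB7 (fin7 x y hx hxy h2)
      have A1 := intervalIntegral.integral_add_adjacent_intervals
        (hI 0 (1/4) le_rfl (by norm_num)) (hI (1/4) (1/2) (by norm_num) (by norm_num))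
      have A2 := intervalIntegral.integral_add_adjacent_intervals
        (hI 0 (1/2) le_rfl (by norm_num)) (hI (1/2) (3/4) (by norm_num) (by norm_num))
      have A3 := intervalIntegral.integral_add_adjacent_intervals
        (hI 0 (3/4) le_rfl (by norm_num)) (hI (3/4) 1 (by norm_num) (by norm_num))
      have A4 := intervalIntegral.integral_add_adjacent_intervals
        (hI 0 1 le_rfl (by norm_num)) (hI 1 (5/4) (by norm_num) (by norm_num))
      have A5 := intervalIntegral.integral_add_adjacent_intervals
        (hI 0 (5/4) le_rfl (by norm_num)) (hI (5/4) (3/2) (by norm_num) (by norm_num))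
      have A6 := intervalIntegral.integral_add_adjacent_intervals
        (hI 0 (3/2) le_rfl (by norm_num)) (hI (3/2) 2 (by norm_num) (by norm_num))
      have A7 := intervalIntegral.integral_add_adjacent_intervals
        (hI 0 2 le_rfl (by norm_num)) (hI 2 4 (by norm_num) (by norm_num))
      have key : ∫ η in (0:ℝ)..s, Gfun x y η
          = ∫ η in (min s 0)..(min s 4), Gfun x y η := by rw [m0, m8]
      rw [key, ← A7, ← A6, ← A5, ← A4, ← A3, ← A2, ← A1]
      rw [m0] at P0 ⊢
      linarith [P0, P1, P2, P3, P4, P5, P6, P7, hX0]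
  linarith [main]
end
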